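/- Measurability of the pricing map: under the seniority structure condition (with the functions ψⁱⱼ not depending on a), the map Ψ that assigns to each exogenous asset vector a ∈ ℝ^n with a ≥ 0 the unique solution (r¹(a),…,r^m(a),s(a)) ∈ ℝ^{n(m+1)} of the liquidation value system is Borel- (hence Lebesgue-) measurable. -/

import Mathlib

open Matrix Finset Filter

noncomputable section

/-- Componentwise minimum of two vectors in ℝ^n. -/
def vmin {n : ℕ} (x y : Fin n → ℝ) : Fin n → ℝ := fun k => min (x k) (y k)

/-- Componentwise positive part of a vector in ℝ^n. -/
def vpos {n : ℕ} (x : Fin n → ℝ) : Fin n → ℝ := fun k => max (x k) 0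

/-- ℓ¹-norm of a vector in ℝ^n. -/
def l1 {n : ℕ} (x : Fin n → ℝ) : ℝ := ∑ k, |x k|

/-- An n×n matrix is strictly left substochastic if all entries are nonnegative
and every column sum is < 1. -/
def StrictlyLeftSubstochastic {n : ℕ} (M : Matrix (Fin n) (Fin n) ℝ) : Prop :=
  (∀ i j, 0 ≤ M i j) ∧ ∀ j, ∑ i, M i j < 1

/-- The liquidation value system: `r j` for `j = 0` is the highest-priority recovery claim,
`s` is equity. -/
def LiqSystem {n m : ℕ} (a : Fin n → ℝ) (Ms : Matrix (Fin n) (Fin n) ℝ)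
    (Md : Fin m → Matrix (Fin n) (Fin n) ℝ)
    (d : Fin m → (Fin m → Fin n → ℝ) → (Fin n → ℝ) → (Fin n → ℝ))
    (r : Fin m → Fin n → ℝ) (s : Fin n → ℝ) : Prop :=
  (∀ j : Fin m, (j : ℕ) = 0 →
    r j = vmin (d j r s) (a + Ms.mulVec s + ∑ i, (Md i).mulVec (r i))) ∧
  (∀ j : Fin m, (j : ℕ) ≠ 0 →
    r j = vmin (d j r s)
      (vpos (a + Ms.mulVec s + ∑ i, (Md i).mulVec (r i) - ∑ i ∈ Finset.Iio j, d i r s))) ∧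
  s = vpos (a + Ms.mulVec s + ∑ i, (Md i).mulVec (r i) - ∑ i, d i r s)

/-- I^max : the maximum column sum over all ownership matrices. -/
def Imax {n m : ℕ} (Ms : Matrix (Fin n) (Fin n) ℝ)
    (Md : Fin m → Matrix (Fin n) (Fin n) ℝ) : ℝ :=
  max (⨆ j, ∑ i, Ms i j) (⨆ l, ⨆ j, ∑ i, (Md l) i j)

open Topology


-- scalar building blocks
def Gf (Ψ : ℕ → ℝ → ℝ) (c : ℝ) (i : ℕ) (y : ℝ) : ℝ :=
  if i = 0 then min (Ψ i y) (c + y)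
  else min (Ψ i y) (max (c + y - ∑ l ∈ Finset.range i, Ψ l y) 0)

def Hf (Ψ : ℕ → ℝ → ℝ) (c : ℝ) (m : ℕ) (y : ℝ) : ℝ :=
  max (c + y - ∑ l ∈ Finset.range m, Ψ l y) 0

def Qf (Ψ : ℕ → ℝ → ℝ) (c : ℝ) (y : ℝ) (i : ℕ) : ℝ :=
  if i = 0 then c + y else max (c + y - ∑ l ∈ Finset.range i, Ψ l y) 0

lemma min_eq_sub (a b : ℝ) : min a b = b - max (b - a) 0 := by
  rcases le_total a b with h | h
  · rw [min_eq_left h, max_eq_left (by linarith)]; ring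
  · rw [min_eq_right h, max_eq_right (by linarith)]; ring

lemma min_max_eq_sub (a b : ℝ) (ha : 0 ≤ a) :
    min a (max b 0) = max b 0 - max (b - a) 0 := by
  rcases le_total b 0 with h | h
  · rw [max_eq_right h, max_eq_right (by linarith), min_eq_right ha]; ring
  · rw [max_eq_left h, min_eq_sub]

lemma Gf_eq_Qf_sub (Ψ : ℕ → ℝ → ℝ) (c : ℝ) (hnn : ∀ l y, 0 ≤ Ψ l y) (i : ℕ) (y : ℝ) :
    Gf Ψ c i y = Qf Ψ c y i - Qf Ψ c y (i + 1) := by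
  unfold Gf Qf
  rcases i with _ | i
  · simp [Finset.sum_range_one, min_eq_sub]
  · simp only [Nat.succ_ne_zero, if_false]
    rw [min_max_eq_sub _ _ (hnn _ _), Finset.sum_range_succ (fun l => Ψ l y) (i + 1)]
    ring_nf

lemma sum_Gf_add_Hf (Ψ : ℕ → ℝ → ℝ) (c : ℝ) (hnn : ∀ l y, 0 ≤ Ψ l y) {m : ℕ} (hm : 0 < m) (y : ℝ) :
    (∑ i ∈ Finset.range m, Gf Ψ c i y) + Hf Ψ c m y = c + y := by
  have h1 : ∀ i ∈ Finset.range m, Gf Ψ c i y = Qf Ψ c y i - Qf Ψ c y (i+1) :=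
    fun i _ => Gf_eq_Qf_sub Ψ c hnn i y
  rw [Finset.sum_congr rfl h1, Finset.sum_range_sub' (Qf Ψ c y) m]
  have : Hf Ψ c m y = Qf Ψ c y m := by
    unfold Hf Qf; rw [if_neg hm.ne']
  rw [this, Qf]; simp

lemma base_mono (Ψ : ℕ → ℝ → ℝ) (hmono : ∀ l, Monotone (Ψ l)) {m : ℕ}
    (hlip : ∀ y1 y2 : ℝ, y2 ≤ y1 → ∑ l ∈ Finset.range m, (Ψ l y1 - Ψ l y2) ≤ y1 - y2)
    (c : ℝ) {i : ℕ} (him : i ≤ m) :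
    Monotone fun y => c + y - ∑ l ∈ Finset.range i, Ψ l y := by
  intro y2 y1 h
  have h1 : ∑ l ∈ Finset.range i, (Ψ l y1 - Ψ l y2) ≤ ∑ l ∈ Finset.range m, (Ψ l y1 - Ψ l y2) :=
    Finset.sum_le_sum_of_subset_of_nonneg (Finset.range_subset_range.2 him)
      (fun l _ _ => sub_nonneg.2 (hmono l h))
  have h2 := hlip y1 y2 h
  have h3 : ∑ l ∈ Finset.range i, (Ψ l y1 - Ψ l y2)
      = (∑ l ∈ Finset.range i, Ψ l y1) - ∑ l ∈ Finset.range i, Ψ l y2 :=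
    Finset.sum_sub_distrib _ _
  simp only
  linarith

lemma Gf_mono (Ψ : ℕ → ℝ → ℝ) (hmono : ∀ l, Monotone (Ψ l)) {m : ℕ}
    (hlip : ∀ y1 y2 : ℝ, y2 ≤ y1 → ∑ l ∈ Finset.range m, (Ψ l y1 - Ψ l y2) ≤ y1 - y2)
    (c : ℝ) {i : ℕ} (him : i ≤ m) :
    Monotone (Gf Ψ c i) := by
  unfold Gf
  by_cases hi : i = 0
  · simp only [hi, if_true]
    exact (hmono 0).min (by intro x y h; simpa using h)
  · simp only [hi, if_false]
    exact (hmono i).min ((base_mono Ψ hmono hlip c him).max monotone_const)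

lemma Hf_mono (Ψ : ℕ → ℝ → ℝ) (hmono : ∀ l, Monotone (Ψ l)) {m : ℕ}
    (hlip : ∀ y1 y2 : ℝ, y2 ≤ y1 → ∑ l ∈ Finset.range m, (Ψ l y1 - Ψ l y2) ≤ y1 - y2)
    (c : ℝ) :
    Monotone (Hf Ψ c m) :=
  (base_mono Ψ hmono hlip c le_rfl).max monotone_const

lemma scalar_key_le (Ψ : ℕ → ℝ → ℝ) (hmono : ∀ l, Monotone (Ψ l)) (hnn : ∀ l y, 0 ≤ Ψ l y)
    {m : ℕ} (hm : 0 < m)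
    (hlip : ∀ y1 y2 : ℝ, y2 ≤ y1 → ∑ l ∈ Finset.range m, (Ψ l y1 - Ψ l y2) ≤ y1 - y2)
    (c : ℝ) {y1 y2 : ℝ} (h : y2 ≤ y1) :
    (∑ i ∈ Finset.range m, |Gf Ψ c i y1 - Gf Ψ c i y2|) + |Hf Ψ c m y1 - Hf Ψ c m y2|
      ≤ |y1 - y2| := by
  have h1 : ∀ i ∈ Finset.range m, |Gf Ψ c i y1 - Gf Ψ c i y2| = Gf Ψ c i y1 - Gf Ψ c i y2 :=
    fun i hi => abs_of_nonneg (sub_nonneg.2 (Gf_mono Ψ hmono hlip c (Finset.mem_range.1 hi).le h))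
  rw [Finset.sum_congr rfl h1, abs_of_nonneg (sub_nonneg.2 (Hf_mono Ψ hmono hlip c h)),
    Finset.sum_sub_distrib]
  have e1 := sum_Gf_add_Hf Ψ c hnn hm y1
  have e2 := sum_Gf_add_Hf Ψ c hnn hm y2
  rw [abs_of_nonneg (sub_nonneg.2 h)]
  linarith

lemma scalar_key (Ψ : ℕ → ℝ → ℝ) (hmono : ∀ l, Monotone (Ψ l)) (hnn : ∀ l y, 0 ≤ Ψ l y)
    {m : ℕ} (hm : 0 < m)
    (hlip : ∀ y1 y2 : ℝ, y2 ≤ y1 → ∑ l ∈ Finset.range m, (Ψ l y1 - Ψ l y2) ≤ y1 - y2)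
    (c y1 y2 : ℝ) :
    (∑ i ∈ Finset.range m, |Gf Ψ c i y1 - Gf Ψ c i y2|) + |Hf Ψ c m y1 - Hf Ψ c m y2|
      ≤ |y1 - y2| := by
  rcases le_total y2 y1 with h | h
  · exact scalar_key_le Ψ hmono hnn hm hlip c h
  · calc (∑ i ∈ Finset.range m, |Gf Ψ c i y1 - Gf Ψ c i y2|) + |Hf Ψ c m y1 - Hf Ψ c m y2|
        = (∑ i ∈ Finset.range m, |Gf Ψ c i y2 - Gf Ψ c i y1|)
            + |Hf Ψ c m y2 - Hf Ψ c m y1| := by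
          rw [abs_sub_comm (Hf Ψ c m y1)]
          exact congrArg₂ (· + ·) (Finset.sum_congr rfl fun i _ => abs_sub_comm _ _) rfl
      _ ≤ |y2 - y1| := scalar_key_le Ψ hmono hnn hm hlip c h
      _ = |y1 - y2| := abs_sub_comm _ _

/-- `PsiN f` : extend a `Fin m`-indexed family of scalar functions to `ℕ` by zero. -/
def PsiN {m : ℕ} (f : Fin m → ℝ → ℝ) (l : ℕ) (y : ℝ) : ℝ :=
  if h : l < m then f ⟨l, h⟩ y else 0

lemma sum_Iio_fin {m : ℕ} (f : Fin m → ℝ) (i : Fin m) :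
    ∑ l ∈ Finset.Iio i, f l
      = ∑ l ∈ Finset.range (i : ℕ), (if h : l < m then f ⟨l, h⟩ else 0) := by
  refine Finset.sum_bij' (fun (l : Fin m) (_ : l ∈ Finset.Iio i) => (l : ℕ))
    (fun (l : ℕ) (hl : l ∈ Finset.range (i : ℕ)) =>
      (⟨l, lt_trans (Finset.mem_range.1 hl) i.isLt⟩ : Fin m)) ?_ ?_ ?_ ?_ ?_
  · intro a ha
    have h2 := Finset.mem_Iio.mp ha
    exact Finset.mem_range.mpr h2
  · intro b hb
    exact Finset.mem_Iio.mpr (Fin.lt_def.mpr (by simpa using Finset.mem_range.mp hb))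
  · intro a ha; rfl
  · intro b hb; rfl
  · intro a ha
    rw [dif_pos a.isLt]

/-- The one-step "waterfall" map whose fixed points are exactly the solutions of the
liquidation value system. -/
def Fmap {n m : ℕ} (Ms : Matrix (Fin n) (Fin n) ℝ) (Md : Fin m → Matrix (Fin n) (Fin n) ℝ)
    (d : Fin m → (Fin m → Fin n → ℝ) → (Fin n → ℝ) → (Fin n → ℝ)) (a : Fin n → ℝ)
    (x : (Fin m → Fin n → ℝ) × (Fin n → ℝ)) : (Fin m → Fin n → ℝ) × (Fin n → ℝ) :=
  (fun i => if (i : ℕ) = 0 then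
      vmin (d i x.1 x.2) (a + Ms.mulVec x.2 + ∑ l, (Md l).mulVec (x.1 l))
    else
      vmin (d i x.1 x.2)
        (vpos (a + Ms.mulVec x.2 + ∑ l, (Md l).mulVec (x.1 l) - ∑ l ∈ Finset.Iio i, d l x.1 x.2)),
   vpos (a + Ms.mulVec x.2 + ∑ l, (Md l).mulVec (x.1 l) - ∑ l, d l x.1 x.2))

lemma Fmap_fixed {n m : ℕ} {Ms : Matrix (Fin n) (Fin n) ℝ} {Md : Fin m → Matrix (Fin n) (Fin n) ℝ}
    {d : Fin m → (Fin m → Fin n → ℝ) → (Fin n → ℝ) → (Fin n → ℝ)} {a : Fin n → ℝ}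
    {r : Fin m → Fin n → ℝ} {s : Fin n → ℝ} (h : LiqSystem a Ms Md d r s) :
    Fmap Ms Md d a (r, s) = (r, s) := by
  obtain ⟨h1, h2, h3⟩ := h
  refine Prod.ext ?_ ?_
  · funext i
    by_cases hi : (i : ℕ) = 0
    · simp only [Fmap]
      rw [if_pos hi]
      exact (h1 i hi).symm
    · simp only [Fmap]
      rw [if_neg hi]
      exact (h2 i hi).symm
  · exact h3.symm

lemma Fmap_coord_fst {n m : ℕ} (Ms : Matrix (Fin n) (Fin n) ℝ)
    (Md : Fin m → Matrix (Fin n) (Fin n) ℝ)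
    (d : Fin m → (Fin m → Fin n → ℝ) → (Fin n → ℝ) → (Fin n → ℝ))
    (psi : Fin m → Fin n → ℝ → ℝ)
    (hd_eq : ∀ i r s j, d i r s j = psi i j (Ms.mulVec s j + ∑ l, (Md l).mulVec (r l) j))
    (a : Fin n → ℝ) (x : (Fin m → Fin n → ℝ) × (Fin n → ℝ)) (j : Fin n) (i : Fin m) :
    (Fmap Ms Md d a x).1 i j
      = Gf (PsiN (fun l => psi l j)) (a j) (i : ℕ)
          (Ms.mulVec x.2 j + ∑ l, (Md l).mulVec (x.1 l) j) := by
  have hP : PsiN (fun l => psi l j) (i : ℕ)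
      (Ms.mulVec x.2 j + ∑ l, (Md l).mulVec (x.1 l) j) = psi i j
      (Ms.mulVec x.2 j + ∑ l, (Md l).mulVec (x.1 l) j) := by
    simp [PsiN]
  by_cases hi : (i : ℕ) = 0
  · simp only [Fmap]
    rw [if_pos hi]
    unfold Gf
    rw [if_pos hi, hP]
    simp only [vmin, Pi.add_apply, Finset.sum_apply, hd_eq]
    congr 1
    ring
  · simp only [Fmap]
    rw [if_neg hi]
    unfold Gf
    rw [if_neg hi, hP]
    simp only [vmin, vpos, Pi.add_apply, Pi.sub_apply, Finset.sum_apply, hd_eq]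
    congr 1
    congr 1
    rw [sum_Iio_fin
      (fun l => psi l j (Ms.mulVec x.2 j + ∑ l, (Md l).mulVec (x.1 l) j)) i]
    have hsum : ∑ l ∈ Finset.range (i : ℕ),
        (if h : l < m then psi ⟨l, h⟩ j (Ms.mulVec x.2 j + ∑ l, (Md l).mulVec (x.1 l) j) else 0)
        = ∑ l ∈ Finset.range (i : ℕ),
          PsiN (fun l => psi l j) l (Ms.mulVec x.2 j + ∑ l, (Md l).mulVec (x.1 l) j) := by
      refine Finset.sum_congr rfl fun l _ => ?_
      simp only [PsiN]
    rw [hsum]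
    ring

lemma Fmap_coord_snd {n m : ℕ} (Ms : Matrix (Fin n) (Fin n) ℝ)
    (Md : Fin m → Matrix (Fin n) (Fin n) ℝ)
    (d : Fin m → (Fin m → Fin n → ℝ) → (Fin n → ℝ) → (Fin n → ℝ))
    (psi : Fin m → Fin n → ℝ → ℝ)
    (hd_eq : ∀ i r s j, d i r s j = psi i j (Ms.mulVec s j + ∑ l, (Md l).mulVec (r l) j))
    (a : Fin n → ℝ) (x : (Fin m → Fin n → ℝ) × (Fin n → ℝ)) (j : Fin n) :
    (Fmap Ms Md d a x).2 j
      = Hf (PsiN (fun l => psi l j)) (a j) m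
          (Ms.mulVec x.2 j + ∑ l, (Md l).mulVec (x.1 l) j) := by
  simp only [Fmap, vpos, Pi.add_apply, Pi.sub_apply, Finset.sum_apply, Hf, hd_eq]
  congr 1
  have hsum : ∑ l : Fin m, psi l j (Ms.mulVec x.2 j + ∑ l, (Md l).mulVec (x.1 l) j)
      = ∑ l ∈ Finset.range m,
        PsiN (fun l => psi l j) l (Ms.mulVec x.2 j + ∑ l, (Md l).mulVec (x.1 l) j) := by
    rw [← Fin.sum_univ_eq_sum_range
      (fun l => PsiN (fun l => psi l j) l (Ms.mulVec x.2 j + ∑ l, (Md l).mulVec (x.1 l) j)) m]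
    exact Finset.sum_congr rfl fun l _ => by simp [PsiN]
  rw [hsum]
  ring

/-- The ℓ¹ distance on the state space. -/
def Dl1 {n m : ℕ} (x y : (Fin m → Fin n → ℝ) × (Fin n → ℝ)) : ℝ :=
  (∑ l, ∑ k, |x.1 l k - y.1 l k|) + ∑ k, |x.2 k - y.2 k|

lemma Dl1_nonneg {n m : ℕ} (x y : (Fin m → Fin n → ℝ) × (Fin n → ℝ)) : 0 ≤ Dl1 x y :=
  add_nonneg (Finset.sum_nonneg fun l _ => Finset.sum_nonneg fun k _ => abs_nonneg _)
    (Finset.sum_nonneg fun k _ => abs_nonneg _)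

lemma abs_fst_le_Dl1 {n m : ℕ} (x y : (Fin m → Fin n → ℝ) × (Fin n → ℝ)) (l : Fin m) (k : Fin n) :
    |x.1 l k - y.1 l k| ≤ Dl1 x y := by
  have h1 : |x.1 l k - y.1 l k| ≤ ∑ k, |x.1 l k - y.1 l k| :=
    Finset.single_le_sum (f := fun k => |x.1 l k - y.1 l k|)
      (fun k _ => abs_nonneg _) (Finset.mem_univ k)
  have h2 : (∑ k, |x.1 l k - y.1 l k|) ≤ ∑ l, ∑ k, |x.1 l k - y.1 l k| :=
    Finset.single_le_sum (f := fun l => ∑ k, |x.1 l k - y.1 l k|)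
      (fun l _ => Finset.sum_nonneg fun k _ => abs_nonneg _) (Finset.mem_univ l)
  have h3 : (0:ℝ) ≤ ∑ k, |x.2 k - y.2 k| := Finset.sum_nonneg fun k _ => abs_nonneg _
  unfold Dl1; linarith

lemma abs_snd_le_Dl1 {n m : ℕ} (x y : (Fin m → Fin n → ℝ) × (Fin n → ℝ)) (k : Fin n) :
    |x.2 k - y.2 k| ≤ Dl1 x y := by
  have h1 : |x.2 k - y.2 k| ≤ ∑ k, |x.2 k - y.2 k| :=
    Finset.single_le_sum (f := fun k => |x.2 k - y.2 k|)
      (fun k _ => abs_nonneg _) (Finset.mem_univ k)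
  have h2 : (0:ℝ) ≤ ∑ l, ∑ k, |x.1 l k - y.1 l k| :=
    Finset.sum_nonneg fun l _ => Finset.sum_nonneg fun k _ => abs_nonneg _
  unfold Dl1; linarith

lemma Fmap_contract {n m : ℕ} (hm : 0 < m) (Ms : Matrix (Fin n) (Fin n) ℝ)
    (hMs : ∀ i j, 0 ≤ Ms i j)
    (Md : Fin m → Matrix (Fin n) (Fin n) ℝ) (hMd : ∀ l i j, 0 ≤ Md l i j)
    (d : Fin m → (Fin m → Fin n → ℝ) → (Fin n → ℝ) → (Fin n → ℝ))
    (psi : Fin m → Fin n → ℝ → ℝ)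
    (hpsi_nonneg : ∀ i j y, 0 ≤ psi i j y)
    (hpsi_mono : ∀ i j, Monotone (psi i j))
    (hd_eq : ∀ i r s j, d i r s j = psi i j (Ms.mulVec s j + ∑ l, (Md l).mulVec (r l) j))
    (hpsi_lip : ∀ j (y1 y2 : ℝ), y2 ≤ y1 → ∑ i, (psi i j y1 - psi i j y2) ≤ y1 - y2)
    (κ : ℝ) (hκs : ∀ k, ∑ j, Ms j k ≤ κ) (hκd : ∀ l k, ∑ j, (Md l) j k ≤ κ)
    (a : Fin n → ℝ) (x1 x2 : (Fin m → Fin n → ℝ) × (Fin n → ℝ)) :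
    Dl1 (Fmap Ms Md d a x1) (Fmap Ms Md d a x2) ≤ κ * Dl1 x1 x2 := by
  classical
  set Y : ((Fin m → Fin n → ℝ) × (Fin n → ℝ)) → Fin n → ℝ :=
    fun x j => Ms.mulVec x.2 j + ∑ l, (Md l).mulVec (x.1 l) j with hY
  -- PsiN properties
  have hmono : ∀ (j : Fin n) (l : ℕ), Monotone (PsiN (fun l => psi l j) l) := by
    intro j l
    unfold PsiN
    by_cases h : l < m
    · simp only [dif_pos h]; exact hpsi_mono _ j
    · simp only [dif_neg h]; exact monotone_const
  have hnn : ∀ (j : Fin n) (l : ℕ) (y : ℝ), 0 ≤ PsiN (fun l => psi l j) l y := by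
    intro j l y
    unfold PsiN
    by_cases h : l < m
    · simp only [dif_pos h]; exact hpsi_nonneg _ j y
    · simp only [dif_neg h]; exact le_rfl
  have hlip : ∀ (j : Fin n) (y1 y2 : ℝ), y2 ≤ y1 →
      ∑ l ∈ Finset.range m,
        (PsiN (fun l => psi l j) l y1 - PsiN (fun l => psi l j) l y2) ≤ y1 - y2 := by
    intro j y1 y2 h
    have : ∑ l ∈ Finset.range m,
        (PsiN (fun l => psi l j) l y1 - PsiN (fun l => psi l j) l y2)
        = ∑ i : Fin m, (psi i j y1 - psi i j y2) := by
      rw [← Fin.sum_univ_eq_sum_range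
        (fun l => PsiN (fun l => psi l j) l y1 - PsiN (fun l => psi l j) l y2) m]
      exact Finset.sum_congr rfl fun i _ => by simp [PsiN]
    rw [this]; exact hpsi_lip j y1 y2 h
  -- step 1: per-node estimate
  have step1 : Dl1 (Fmap Ms Md d a x1) (Fmap Ms Md d a x2) ≤ ∑ j, |Y x1 j - Y x2 j| := by
    rw [Dl1, Finset.sum_comm, ← Finset.sum_add_distrib]
    refine Finset.sum_le_sum fun j _ => ?_
    have e1 : ∑ l : Fin m, |(Fmap Ms Md d a x1).1 l j - (Fmap Ms Md d a x2).1 l j|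
        = ∑ i ∈ Finset.range m,
          |Gf (PsiN (fun l => psi l j)) (a j) i (Y x1 j)
            - Gf (PsiN (fun l => psi l j)) (a j) i (Y x2 j)| := by
      rw [← Fin.sum_univ_eq_sum_range
        (fun i => |Gf (PsiN (fun l => psi l j)) (a j) i (Y x1 j)
          - Gf (PsiN (fun l => psi l j)) (a j) i (Y x2 j)|) m]
      refine Finset.sum_congr rfl fun l _ => ?_
      rw [Fmap_coord_fst Ms Md d psi hd_eq a x1 j l, Fmap_coord_fst Ms Md d psi hd_eq a x2 j l]
    have e2 : |(Fmap Ms Md d a x1).2 j - (Fmap Ms Md d a x2).2 j|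
        = |Hf (PsiN (fun l => psi l j)) (a j) m (Y x1 j)
            - Hf (PsiN (fun l => psi l j)) (a j) m (Y x2 j)| := by
      rw [Fmap_coord_snd Ms Md d psi hd_eq a x1 j, Fmap_coord_snd Ms Md d psi hd_eq a x2 j]
    rw [e1, e2]
    exact scalar_key (PsiN (fun l => psi l j)) (hmono j) (hnn j) hm (hlip j) (a j)
      (Y x1 j) (Y x2 j)
  -- step 2: matrix norm estimate
  have step2 : ∑ j, |Y x1 j - Y x2 j| ≤ κ * Dl1 x1 x2 := by
    have hj : ∀ j, |Y x1 j - Y x2 j| ≤ (∑ k, Ms j k * |x1.2 k - x2.2 k|)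
        + ∑ l, ∑ k, (Md l) j k * |x1.1 l k - x2.1 l k| := by
      intro j
      have hdiff : Y x1 j - Y x2 j = (∑ k, Ms j k * (x1.2 k - x2.2 k))
          + ∑ l, ∑ k, (Md l) j k * (x1.1 l k - x2.1 l k) := by
        have hA : ∑ k, Ms j k * (x1.2 k - x2.2 k)
            = (∑ k, Ms j k * x1.2 k) - ∑ k, Ms j k * x2.2 k := by
          rw [← Finset.sum_sub_distrib]
          exact Finset.sum_congr rfl fun k _ => by ring
        have hC : ∑ l, ∑ k, (Md l) j k * (x1.1 l k - x2.1 l k)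
            = (∑ l, ∑ k, (Md l) j k * x1.1 l k) - ∑ l, ∑ k, (Md l) j k * x2.1 l k := by
          rw [← Finset.sum_sub_distrib]
          refine Finset.sum_congr rfl fun l _ => ?_
          rw [← Finset.sum_sub_distrib]
          exact Finset.sum_congr rfl fun k _ => by ring
        rw [hA, hC]
        simp only [hY, Matrix.mulVec, dotProduct]
        ring
      rw [hdiff]
      refine le_trans (abs_add_le _ _) (add_le_add ?_ ?_)
      · refine le_trans (Finset.abs_sum_le_sum_abs _ _) (le_of_eq ?_)
        exact Finset.sum_congr rfl fun k _ => by rw [abs_mul, abs_of_nonneg (hMs j k)]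
      · refine le_trans (Finset.abs_sum_le_sum_abs _ _) (Finset.sum_le_sum fun l _ => ?_)
        refine le_trans (Finset.abs_sum_le_sum_abs _ _) (le_of_eq ?_)
        exact Finset.sum_congr rfl fun k _ => by rw [abs_mul, abs_of_nonneg (hMd l j k)]
    calc ∑ j, |Y x1 j - Y x2 j|
        ≤ ∑ j, ((∑ k, Ms j k * |x1.2 k - x2.2 k|)
            + ∑ l, ∑ k, (Md l) j k * |x1.1 l k - x2.1 l k|) :=
          Finset.sum_le_sum fun j _ => hj j
      _ = (∑ k, (∑ j, Ms j k) * |x1.2 k - x2.2 k|)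
            + ∑ l, ∑ k, (∑ j, (Md l) j k) * |x1.1 l k - x2.1 l k| := by
          rw [Finset.sum_add_distrib]
          congr 1
          · rw [Finset.sum_comm]
            exact Finset.sum_congr rfl fun k _ => (Finset.sum_mul _ _ _).symm
          · rw [Finset.sum_comm]
            refine Finset.sum_congr rfl fun l _ => ?_
            rw [Finset.sum_comm]
            exact Finset.sum_congr rfl fun k _ => (Finset.sum_mul _ _ _).symm
      _ ≤ (∑ k, κ * |x1.2 k - x2.2 k|) + ∑ l, ∑ k, κ * |x1.1 l k - x2.1 l k| :=
          add_le_add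
            (Finset.sum_le_sum fun k _ =>
              mul_le_mul_of_nonneg_right (hκs k) (abs_nonneg _))
            (Finset.sum_le_sum fun l _ => Finset.sum_le_sum fun k _ =>
              mul_le_mul_of_nonneg_right (hκd l k) (abs_nonneg _))
      _ = κ * Dl1 x1 x2 := by
          rw [Dl1, ← Finset.mul_sum]
          have : ∑ l, ∑ k, κ * |x1.1 l k - x2.1 l k|
              = κ * ∑ l, ∑ k, |x1.1 l k - x2.1 l k| := by
            rw [Finset.mul_sum]
            exact Finset.sum_congr rfl fun l _ => (Finset.mul_sum _ _ _).symm
          rw [this]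
          ring
  exact le_trans step1 step2

/-- Fixed-point iterates of the waterfall map, starting from zero. -/
def iterF {n m : ℕ} (Ms : Matrix (Fin n) (Fin n) ℝ) (Md : Fin m → Matrix (Fin n) (Fin n) ℝ)
    (d : Fin m → (Fin m → Fin n → ℝ) → (Fin n → ℝ) → (Fin n → ℝ)) (a : Fin n → ℝ) :
    ℕ → (Fin m → Fin n → ℝ) × (Fin n → ℝ)
  | 0 => (fun _ _ => 0, fun _ => 0)
  | (N + 1) => Fmap Ms Md d a (iterF Ms Md d a N)

lemma Fmap_measurable {n m : ℕ} (Ms : Matrix (Fin n) (Fin n) ℝ)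
    (Md : Fin m → Matrix (Fin n) (Fin n) ℝ)
    (d : Fin m → (Fin m → Fin n → ℝ) → (Fin n → ℝ) → (Fin n → ℝ))
    (psi : Fin m → Fin n → ℝ → ℝ)
    (hpsi_mono : ∀ i j, Monotone (psi i j))
    (hd_eq : ∀ i r s j, d i r s j = psi i j (Ms.mulVec s j + ∑ l, (Md l).mulVec (r l) j)) :
    Measurable (fun p : (Fin n → ℝ) × ((Fin m → Fin n → ℝ) × (Fin n → ℝ)) =>
      Fmap Ms Md d p.1 p.2) := by
  classical
  have hY : ∀ j : Fin n, Measurable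
      (fun p : (Fin n → ℝ) × ((Fin m → Fin n → ℝ) × (Fin n → ℝ)) =>
        Ms.mulVec p.2.2 j + ∑ l, (Md l).mulVec (p.2.1 l) j) := by
    intro j
    apply Measurable.add
    · simp only [Matrix.mulVec, dotProduct]
      exact Finset.measurable_sum _ fun k _ =>
        ((measurable_pi_apply k).comp (measurable_snd.comp measurable_snd)).const_mul _
    · refine Finset.measurable_sum _ fun l _ => ?_
      simp only [Matrix.mulVec, dotProduct]
      refine Finset.measurable_sum _ fun k _ => Measurable.const_mul ?_ _
      have h1 : Measurable (fun p : (Fin n → ℝ) × ((Fin m → Fin n → ℝ) × (Fin n → ℝ)) =>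
          p.2.1 l) := (measurable_pi_apply l).comp (measurable_fst.comp measurable_snd)
      exact (measurable_pi_apply k).comp h1
  have hPsiN : ∀ (j : Fin n) (l : ℕ), Measurable (PsiN (fun l => psi l j) l) := by
    intro j l
    unfold PsiN
    by_cases h : l < m
    · simp only [dif_pos h]; exact (hpsi_mono _ j).measurable
    · simp only [dif_neg h]; exact measurable_const
  have hc : ∀ j : Fin n, Measurable
      (fun p : (Fin n → ℝ) × ((Fin m → Fin n → ℝ) × (Fin n → ℝ)) => p.1 j) :=
    fun j => (measurable_pi_apply j).comp measurable_fst
  have hGf : ∀ (j : Fin n) (i : ℕ), Measurable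
      (fun p : (Fin n → ℝ) × ((Fin m → Fin n → ℝ) × (Fin n → ℝ)) =>
        Gf (PsiN (fun l => psi l j)) (p.1 j) i
          (Ms.mulVec p.2.2 j + ∑ l, (Md l).mulVec (p.2.1 l) j)) := by
    intro j i
    unfold Gf
    by_cases hi : i = 0
    · simp only [if_pos hi]
      exact ((hPsiN j i).comp (hY j)).min ((hc j).add (hY j))
    · simp only [if_neg hi]
      refine ((hPsiN j i).comp (hY j)).min (Measurable.max ?_ measurable_const)
      exact ((hc j).add (hY j)).sub
        (Finset.measurable_sum _ fun l _ => (hPsiN j l).comp (hY j))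
  have hHf : ∀ j : Fin n, Measurable
      (fun p : (Fin n → ℝ) × ((Fin m → Fin n → ℝ) × (Fin n → ℝ)) =>
        Hf (PsiN (fun l => psi l j)) (p.1 j) m
          (Ms.mulVec p.2.2 j + ∑ l, (Md l).mulVec (p.2.1 l) j)) := by
    intro j
    unfold Hf
    refine Measurable.max ?_ measurable_const
    exact ((hc j).add (hY j)).sub
      (Finset.measurable_sum _ fun l _ => (hPsiN j l).comp (hY j))
  refine Measurable.prod ?_ ?_
  · refine measurable_pi_lambda _ fun i => measurable_pi_lambda _ fun j => ?_
    simp only [Fmap_coord_fst Ms Md d psi hd_eq]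
    exact hGf j (i : ℕ)
  · refine measurable_pi_lambda _ fun j => ?_
    simp only [Fmap_coord_snd Ms Md d psi hd_eq]
    exact hHf j

lemma iterF_measurable {n m : ℕ} (Ms : Matrix (Fin n) (Fin n) ℝ)
    (Md : Fin m → Matrix (Fin n) (Fin n) ℝ)
    (d : Fin m → (Fin m → Fin n → ℝ) → (Fin n → ℝ) → (Fin n → ℝ))
    (psi : Fin m → Fin n → ℝ → ℝ)
    (hpsi_mono : ∀ i j, Monotone (psi i j))
    (hd_eq : ∀ i r s j, d i r s j = psi i j (Ms.mulVec s j + ∑ l, (Md l).mulVec (r l) j))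
    (N : ℕ) : Measurable (fun a : Fin n → ℝ => iterF Ms Md d a N) := by
  induction N with
  | zero => exact measurable_const
  | succ N ih =>
    have : (fun a : Fin n → ℝ => iterF Ms Md d a (N + 1))
        = (fun p : (Fin n → ℝ) × ((Fin m → Fin n → ℝ) × (Fin n → ℝ)) => Fmap Ms Md d p.1 p.2)
          ∘ (fun a => (a, iterF Ms Md d a N)) := rfl
    rw [this]
    exact (Fmap_measurable Ms Md d psi hpsi_mono hd_eq).comp (measurable_id.prodMk ih)

/-- Measurability of the pricing map: any map Ψ assigning to each nonnegative exogenous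
asset vector a the (unique) solution of the liquidation value system is
Borel-measurable (on the nonnegative orthant). -/
theorem pricing_map_measurable {n m : ℕ} (hn : 0 < n) (hm : 0 < m)
    (Ms : Matrix (Fin n) (Fin n) ℝ) (hMs : StrictlyLeftSubstochastic Ms)
    (Md : Fin m → Matrix (Fin n) (Fin n) ℝ) (hMd : ∀ i, StrictlyLeftSubstochastic (Md i))
    (d : Fin m → (Fin m → Fin n → ℝ) → (Fin n → ℝ) → (Fin n → ℝ))
    (hd : ∀ i r s k, 0 ≤ d i r s k)
    (psi : Fin m → Fin n → ℝ → ℝ)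
    (hpsi_nonneg : ∀ i j y, 0 ≤ psi i j y)
    (hpsi_mono : ∀ i j, Monotone (psi i j))
    (hd_eq : ∀ i r s j, d i r s j = psi i j (Ms.mulVec s j + ∑ l, (Md l).mulVec (r l) j))
    (hpsi_lip : ∀ j (y1 y2 : ℝ), y2 ≤ y1 → ∑ i, (psi i j y1 - psi i j y2) ≤ y1 - y2)
    (Psi : (Fin n → ℝ) → (Fin m → Fin n → ℝ) × (Fin n → ℝ))
    (hPsi : ∀ a : Fin n → ℝ, (∀ k, 0 ≤ a k) → LiqSystem a Ms Md d (Psi a).1 (Psi a).2) :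
    Measurable ({a : Fin n → ℝ | ∀ k, 0 ≤ a k}.restrict Psi) := by
  classical
  -- a uniform strict bound on all column sums
  obtain ⟨κ, hκ0, hκ1, hκs, hκd⟩ : ∃ κ : ℝ, 0 ≤ κ ∧ κ < 1 ∧
      (∀ k, ∑ j, Ms j k ≤ κ) ∧ ∀ l k, ∑ j, (Md l) j k ≤ κ := by
    have hne : (Finset.univ : Finset (Fin n ⊕ (Fin m × Fin n))).Nonempty :=
      ⟨Sum.inl ⟨0, hn⟩, Finset.mem_univ _⟩
    set f : Fin n ⊕ (Fin m × Fin n) → ℝ :=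
      Sum.elim (fun k => ∑ j, Ms j k) (fun p => ∑ j, (Md p.1) j p.2) with hf
    refine ⟨Finset.univ.sup' hne f, ?_, ?_, ?_, ?_⟩
    · have h0 : (0:ℝ) ≤ ∑ j, Ms j ⟨0, hn⟩ :=
        Finset.sum_nonneg fun j _ => hMs.1 j ⟨0, hn⟩
      have h1 := Finset.le_sup' f (Finset.mem_univ (Sum.inl (⟨0, hn⟩ : Fin n)))
      simp only [hf, Sum.elim_inl] at h1
      exact le_trans h0 h1
    · refine (Finset.sup'_lt_iff hne).mpr fun z _ => ?_
      rcases z with k | p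
      · exact hMs.2 k
      · exact (hMd p.1).2 p.2
    · intro k
      have h1 := Finset.le_sup' f (Finset.mem_univ (Sum.inl k))
      simpa only [hf, Sum.elim_inl] using h1
    · intro l k
      have h1 := Finset.le_sup' f (Finset.mem_univ (Sum.inr (l, k)))
      simpa only [hf, Sum.elim_inr] using h1
  have hfix : ∀ a : Fin n → ℝ, (∀ k, 0 ≤ a k) → Fmap Ms Md d a (Psi a) = Psi a := by
    intro a ha
    have h := Fmap_fixed (hPsi a ha)
    simpa using h
  have hMd' : ∀ l i j, 0 ≤ Md l i j := fun l => (hMd l).1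
  have hcontract : ∀ a x1 x2, Dl1 (Fmap Ms Md d a x1) (Fmap Ms Md d a x2) ≤ κ * Dl1 x1 x2 :=
    fun a x1 x2 => Fmap_contract hm Ms hMs.1 Md hMd' d psi hpsi_nonneg hpsi_mono hd_eq
      hpsi_lip κ hκs hκd a x1 x2
  have hiter : ∀ (a : Fin n → ℝ), (∀ k, 0 ≤ a k) → ∀ N,
      Dl1 (iterF Ms Md d a N) (Psi a) ≤ κ ^ N * Dl1 (iterF Ms Md d a 0) (Psi a) := by
    intro a ha N
    induction N with
    | zero => simp
    | succ N ih =>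
      have h1 : Dl1 (iterF Ms Md d a (N + 1)) (Psi a)
          = Dl1 (Fmap Ms Md d a (iterF Ms Md d a N)) (Fmap Ms Md d a (Psi a)) := by
        rw [hfix a ha, iterF]
      rw [h1]
      calc Dl1 (Fmap Ms Md d a (iterF Ms Md d a N)) (Fmap Ms Md d a (Psi a))
          ≤ κ * Dl1 (iterF Ms Md d a N) (Psi a) := hcontract a _ _
        _ ≤ κ * (κ ^ N * Dl1 (iterF Ms Md d a 0) (Psi a)) :=
            mul_le_mul_of_nonneg_left ih hκ0
        _ = κ ^ (N + 1) * Dl1 (iterF Ms Md d a 0) (Psi a) := by ring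
  have hm0 : ∀ N, Measurable fun x : {a : Fin n → ℝ | ∀ k, 0 ≤ a k} => iterF Ms Md d x.val N :=
    fun N => (iterF_measurable Ms Md d psi hpsi_mono hd_eq N).comp measurable_subtype_coe
  have hDtend : ∀ x : {a : Fin n → ℝ | ∀ k, 0 ≤ a k},
      Tendsto (fun N => Dl1 (iterF Ms Md d x.val N) (Psi x.val)) atTop (𝓝 0) := by
    intro x
    have h0 : Tendsto (fun N => κ ^ N * Dl1 (iterF Ms Md d x.val 0) (Psi x.val)) atTop (𝓝 0) := by
      have h1 := (tendsto_pow_atTop_nhds_zero_of_lt_one hκ0 hκ1).mul_const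
        (Dl1 (iterF Ms Md d x.val 0) (Psi x.val))
      simpa using h1
    exact squeeze_zero (fun N => Dl1_nonneg _ _) (fun N => hiter x.val x.property N) h0
  refine Measurable.prod ?_ ?_
  · refine measurable_pi_lambda _ fun l => measurable_pi_lambda _ fun k => ?_
    refine measurable_of_tendsto_metrizable' atTop
      (f := fun N (x : {a : Fin n → ℝ | ∀ k, 0 ≤ a k}) => (iterF Ms Md d x.val N).1 l k)
      (fun N => (measurable_pi_apply k).comp
        ((measurable_pi_apply l).comp (measurable_fst.comp (hm0 N)))) ?_
    rw [tendsto_pi_nhds]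
    intro x
    have hb : ∀ N, |(iterF Ms Md d x.val N).1 l k - (Psi x.val).1 l k|
        ≤ Dl1 (iterF Ms Md d x.val N) (Psi x.val) := fun N => abs_fst_le_Dl1 _ _ l k
    have habs : Tendsto (fun N => |(iterF Ms Md d x.val N).1 l k - (Psi x.val).1 l k|)
        atTop (𝓝 0) := squeeze_zero (fun N => abs_nonneg _) hb (hDtend x)
    rw [tendsto_iff_dist_tendsto_zero]
    simp only [Real.dist_eq]
    exact habs
  · refine measurable_pi_lambda _ fun k => ?_
    refine measurable_of_tendsto_metrizable' atTop
      (f := fun N (x : {a : Fin n → ℝ | ∀ k, 0 ≤ a k}) => (iterF Ms Md d x.val N).2 k)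
      (fun N => (measurable_pi_apply k).comp (measurable_snd.comp (hm0 N))) ?_
    rw [tendsto_pi_nhds]
    intro x
    have hb : ∀ N, |(iterF Ms Md d x.val N).2 k - (Psi x.val).2 k|
        ≤ Dl1 (iterF Ms Md d x.val N) (Psi x.val) := fun N => abs_snd_le_Dl1 _ _ k
    have habs : Tendsto (fun N => |(iterF Ms Md d x.val N).2 k - (Psi x.val).2 k|)
        atTop (𝓝 0) := squeeze_zero (fun N => abs_nonneg _) hb (hDtend x)
    rw [tendsto_iff_dist_tendsto_zero]
    simp only [Real.dist_eq]
    exact habs
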